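/- Let R be a commutative ring and A ∈ M_n(R) such that R^n is a cyclic R[t]-module under the action of A (with cyclic vector v). Then any B ∈ M_n(R) commuting with A is a polynomial in A with coefficients in R. -/

import Mathlib

theorem stmt_4 (R : Type*) [CommRing R] (n : ℕ) (A : Matrix (Fin n) (Fin n) R)
    (v : Fin n → R)
    (hcyc : Submodule.span R (Set.range fun i : Fin n => (A ^ (i : ℕ)).mulVec v) = ⊤) :
    ∀ B : Matrix (Fin n) (Fin n) R,
      A * B = B * A → ∃ p : Polynomial R, Polynomial.aeval A p = B := by
  intro B hB
  have hBv : B.mulVec v ∈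
      Submodule.span R (Set.range fun i : Fin n => (A ^ (i : ℕ)).mulVec v) := by
    rw [hcyc]; trivial
  rw [Submodule.mem_span_range_iff_exists_fun] at hBv
  obtain ⟨c, hc⟩ := hBv
  refine ⟨∑ i : Fin n, Polynomial.C (c i) * Polynomial.X ^ (i : ℕ), ?_⟩
  have hp : (Polynomial.aeval A (∑ i : Fin n, Polynomial.C (c i) * Polynomial.X ^ (i : ℕ)))
      = ∑ i : Fin n, c i • A ^ (i : ℕ) := by
    simp [Algebra.smul_def]
  rw [hp]
  set P : Matrix (Fin n) (Fin n) R := ∑ i : Fin n, c i • A ^ (i : ℕ) with hP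
  have hPv : P.mulVec v = B.mulVec v := by
    calc P.mulVec v = Matrix.toLin' P v := rfl
      _ = ∑ i : Fin n, c i • (A ^ (i : ℕ)).mulVec v := by
          rw [hP, map_sum]
          simp [Matrix.toLin'_apply]
          simp only [← Matrix.toLin'_pow, Matrix.toLin'_apply]
      _ = B.mulVec v := hc
  have hPA : ∀ k : ℕ, P * A ^ k = A ^ k * P := by
    intro k
    rw [hP, Finset.sum_mul, Finset.mul_sum]
    refine Finset.sum_congr rfl fun i _ => ?_
    rw [Matrix.smul_mul, Matrix.mul_smul, pow_mul_comm]
  have hBA : ∀ k : ℕ, B * A ^ k = A ^ k * B := fun k =>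
    (Commute.pow_right hB.symm k).eq
  apply Matrix.toLin'.injective
  apply LinearMap.ext_on hcyc
  rintro x ⟨i, rfl⟩
  simp only [Matrix.toLin'_apply]
  rw [Matrix.mulVec_mulVec, Matrix.mulVec_mulVec, hPA, hBA, ← Matrix.mulVec_mulVec,
    ← Matrix.mulVec_mulVec, hPv]
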